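/- Let ε > 0 be real, let G be a group, and let A ⊆ G be a finite nonempty set with |A·A| ≤ (2 − ε)·|A|. Then there exist a finite subgroup H of G with |H| ≤ (2/ε)·|A| and a finite set X ⊆ G with |X| ≤ 2/ε − 1 such that A ⊆ ⋃_{x ∈ X} H·x, i.e. A is covered by at most 2/ε − 1 right-cosets of H. (Hamidoune's theorem.) -/

import Mathlib

open Pointwise

namespace Hamidoune

variable {G : Type*} [Group G] [DecidableEq G]

/-- Greedy system of right-coset representatives. -/
lemma exists_reps (K : Subgroup G) (S : Finset G) :
    ∃ X ⊆ S, (∀ s ∈ S, ∃ x ∈ X, s * x⁻¹ ∈ K) ∧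
      (∀ x ∈ X, ∀ y ∈ X, x * y⁻¹ ∈ K → x = y) := by
  classical
  induction S using Finset.strongInduction with
  | _ S ih =>
    rcases S.eq_empty_or_nonempty with rfl | ⟨a, ha⟩
    · exact ⟨∅, by simp, by simp, by simp⟩
    · set S' := S.filter (fun s => s * a⁻¹ ∉ K) with hS'
      have haS' : a ∉ S' := by simp [hS', ha, K.one_mem]
      have hss : S' ⊂ S := ⟨Finset.filter_subset _ _, fun hsub => haS' (hsub ha)⟩
      obtain ⟨X, hXS, hcov, hdis⟩ := ih S' hss
      have hXK : ∀ x ∈ X, x * a⁻¹ ∉ K := fun x hx => (Finset.mem_filter.mp (hXS hx)).2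
      refine ⟨insert a X, ?_, ?_, ?_⟩
      · exact Finset.insert_subset ha ((hXS.trans (Finset.filter_subset _ _)))
      · intro s hs
        by_cases hsa : s * a⁻¹ ∈ K
        · exact ⟨a, Finset.mem_insert_self _ _, hsa⟩
        · obtain ⟨x, hx, hxk⟩ := hcov s (Finset.mem_filter.mpr ⟨hs, hsa⟩)
          exact ⟨x, Finset.mem_insert_of_mem hx, hxk⟩
      · intro x hx y hy hxy
        rcases Finset.mem_insert.mp hx with hxa | hx'
        · rcases Finset.mem_insert.mp hy with hya | hy'
          · rw [hxa, hya]
          · subst hxa; exact absurd (by simpa using K.inv_mem hxy) (hXK y hy')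
        · rcases Finset.mem_insert.mp hy with hya | hy'
          · subst hya; exact absurd hxy (hXK x hx')
          · exact hdis x hx' y hy' hxy

section Machinery

variable (Γ : Subgroup G) (B : Finset G)

/-- `X` lies in a single left coset of `Γ`. -/
def SC (X : Finset G) : Prop := ∀ x ∈ X, ∀ y ∈ X, x⁻¹ * y ∈ Γ

/-- `X*B` does not exhaust the left coset of `Γ` containing `X`. -/
def Uns (X : Finset G) : Prop := ∀ x ∈ X, ∃ γ ∈ Γ, x * γ ∉ X * B

def Adm (X : Finset G) : Prop := X.Nonempty ∧ SC Γ X ∧ Uns Γ B X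

def KSet : Set ℕ := {k | ∃ X, Adm Γ B X ∧ (X * B).card = X.card + k}

noncomputable def kap : ℕ := sInf (KSet Γ B)

def Frag (X : Finset G) : Prop := Adm Γ B X ∧ (X * B).card = X.card + kap Γ B

def MSet : Set ℕ := {c | ∃ X, Frag Γ B X ∧ X.card = c}

noncomputable def am : ℕ := sInf (MSet Γ B)

def Atom (X : Finset G) : Prop := Frag Γ B X ∧ X.card = am Γ B

variable {Γ B}

lemma subset_mul (hB1 : (1:G) ∈ B) (X : Finset G) : X ⊆ X * B := fun x hx =>
  Finset.mem_mul.mpr ⟨x, hx, 1, hB1, mul_one x⟩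

lemma card_le_mul (hB1 : (1:G) ∈ B) (X : Finset G) : X.card ≤ (X * B).card :=
  Finset.card_le_card (subset_mul hB1 X)

lemma kap_mem (hB1 : (1:G) ∈ B) (hne : ∃ X, Adm Γ B X) : kap Γ B ∈ KSet Γ B := by
  apply Nat.sInf_mem
  obtain ⟨X, hX⟩ := hne
  exact ⟨(X * B).card - X.card, X, hX, by have := card_le_mul hB1 X; omega⟩


lemma kap_le {X : Finset G} {k : ℕ} (hX : Adm Γ B X) (hk : (X * B).card = X.card + k) :
    kap Γ B ≤ k := Nat.sInf_le ⟨X, hX, hk⟩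

lemma frag_exists (hB1 : (1:G) ∈ B) (hne : ∃ X, Adm Γ B X) : ∃ X, Frag Γ B X := by
  obtain ⟨X, hX, hk⟩ := kap_mem hB1 hne
  exact ⟨X, hX, hk⟩

lemma atom_exists (hB1 : (1:G) ∈ B) (hne : ∃ X, Adm Γ B X) : ∃ X, Atom Γ B X := by
  have : am Γ B ∈ MSet Γ B := Nat.sInf_mem (by
    obtain ⟨X, hX⟩ := frag_exists hB1 hne
    exact ⟨X.card, X, hX, rfl⟩)
  obtain ⟨X, hX, hc⟩ := this
  exact ⟨X, hX, hc⟩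

lemma am_le {X : Finset G} (hX : Frag Γ B X) : am Γ B ≤ X.card := Nat.sInf_le ⟨X, hX, rfl⟩

lemma smul_mul (g : G) (X : Finset G) : (g • X) * B = g • (X * B) := smul_mul_assoc g X B

lemma adm_smul (g : G) {X : Finset G} (hX : Adm Γ B X) : Adm Γ B (g • X) := by
  obtain ⟨hne, hSC, hU⟩ := hX
  refine ⟨hne.smul_finset, ?_, ?_⟩
  · intro x hx y hy
    obtain ⟨x', hx', rfl⟩ := Finset.mem_smul_finset.mp hx
    obtain ⟨y', hy', rfl⟩ := Finset.mem_smul_finset.mp hy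
    simpa [mul_assoc] using hSC x' hx' y' hy'
  · intro x hx
    obtain ⟨x', hx', rfl⟩ := Finset.mem_smul_finset.mp hx
    obtain ⟨γ, hγ, hout⟩ := hU x' hx'
    refine ⟨γ, hγ, fun hmem => hout ?_⟩
    rw [smul_mul] at hmem
    obtain ⟨z, hz, hgz⟩ := Finset.mem_smul_finset.mp hmem
    have : z = x' * γ := by
      have := hgz
      simp only [smul_eq_mul] at this
      rwa [mul_assoc, mul_left_cancel_iff] at this
    rwa [this] at hz

lemma frag_smul (g : G) {X : Finset G} (hX : Frag Γ B X) : Frag Γ B (g • X) := by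
  refine ⟨adm_smul g hX.1, ?_⟩
  rw [smul_mul, Finset.card_smul_finset, Finset.card_smul_finset]
  exact hX.2

lemma atom_smul (g : G) {X : Finset G} (hX : Atom Γ B X) : Atom Γ B (g • X) :=
  ⟨frag_smul g hX.1, by rw [Finset.card_smul_finset]; exact hX.2⟩

lemma kap_pos (hB1 : (1:G) ∈ B) (hgen : (Γ : Set G) ⊆ ↑(Subgroup.closure (B : Set G)))
    (hne : ∃ X, Adm Γ B X) : 0 < kap Γ B := by
  rcases Nat.eq_zero_or_pos (kap Γ B) with h | h
  swap
  · exact h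
  exfalso
  obtain ⟨X, ⟨hXne, hSC, hU⟩, hk⟩ := kap_mem hB1 hne
  rw [h, Nat.add_zero] at hk
  have hXB : X * B = X := (Finset.eq_of_subset_of_card_le (subset_mul hB1 X) hk.le).symm
  set T : Subgroup G :=
    { carrier := {g | ∀ x ∈ X, x * g ∈ X}
      one_mem' := by intro x hx; simpa using hx
      mul_mem' := by
        intro g h hg hh x hx
        rw [← mul_assoc]
        exact hh _ (hg x hx)
      inv_mem' := by
        intro g hg x hx
        have himg : Finset.image (· * g) X = X := by
          apply Finset.eq_of_subset_of_card_le
          · intro z hz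
            obtain ⟨y, hy, rfl⟩ := Finset.mem_image.mp hz
            exact hg y hy
          · rw [Finset.card_image_of_injective _ (mul_left_injective g)]
        have : x ∈ Finset.image (· * g) X := himg.symm ▸ hx
        obtain ⟨y, hy, hyx⟩ := Finset.mem_image.mp this
        have : y = x * g⁻¹ := by rw [← hyx]; group
        rwa [← this] } with hT
  have hBT : ∀ b ∈ B, b ∈ T := by
    intro b hb x hx
    rw [← hXB]
    exact Finset.mul_mem_mul hx hb
  have hclT : Subgroup.closure (B : Set G) ≤ T := (Subgroup.closure_le T).mpr (fun b hb => hBT b hb)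
  obtain ⟨x, hx⟩ := hXne
  obtain ⟨γ, hγ, hout⟩ := hU x hx
  exact hout (by rw [hXB]; exact hclT (hgen hγ) x hx)

lemma sat_lemma {X : Finset G} {x : G} (hsat : ∀ γ ∈ Γ, x * γ ∈ X * B) :
    (Γ : Set G).Finite ∧ (Γ : Set G).ncard ≤ (X * B).card := by
  have hsub : (Γ : Set G) ⊆ (fun z => x⁻¹ * z) '' ↑(X * B) := by
    intro γ hγ
    exact ⟨x * γ, hsat γ hγ, by group⟩
  have hfin : (Γ : Set G).Finite :=
    Set.Finite.subset (((X * B).finite_toSet).image _) hsub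
  refine ⟨hfin, ?_⟩
  calc (Γ : Set G).ncard ≤ ((fun z => x⁻¹ * z) '' ↑(X * B)).ncard :=
        Set.ncard_le_ncard hsub (((X * B).finite_toSet).image _)
    _ ≤ (↑(X * B) : Set G).ncard := Set.ncard_image_le ((X * B).finite_toSet)
    _ = (X * B).card := Set.ncard_coe_finset _


lemma adm_inter {P Q : Finset G} (hP : Adm Γ B P) (hQ : Adm Γ B Q)
    (hint : (P ∩ Q).Nonempty) : Adm Γ B (P ∩ Q) := by
  refine ⟨hint, ?_, ?_⟩
  · intro x hx y hy
    exact hP.2.1 x (Finset.mem_of_mem_inter_left hx) y (Finset.mem_of_mem_inter_left hy)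
  · intro x hx
    obtain ⟨γ, hγ, hout⟩ := hP.2.2 x (Finset.mem_of_mem_inter_left hx)
    refine ⟨γ, hγ, fun hmem => hout ?_⟩
    exact Finset.mul_subset_mul_right Finset.inter_subset_left hmem

/-- Dichotomy: two distinct intersecting atoms force `Γ` finite and small. -/
lemma atom_inter (hB1 : (1:G) ∈ B) {P Q : Finset G} (hP : Atom Γ B P) (hQ : Atom Γ B Q)
    (hint : (P ∩ Q).Nonempty) (hPQ : P ≠ Q) :
    (Γ : Set G).Finite ∧ (Γ : Set G).ncard + 1 ≤ 2 * am Γ B + kap Γ B := by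
  obtain ⟨w, hw⟩ := hint
  have hwP := Finset.mem_of_mem_inter_left hw
  have hwQ := Finset.mem_of_mem_inter_right hw
  -- the intersection is admissible, hence has boundary at least κ
  have hAdmI : Adm Γ B (P ∩ Q) := adm_inter hP.1.1 hQ.1.1 ⟨w, hw⟩
  have hIcard : (P ∩ Q).card + kap Γ B ≤ ((P ∩ Q) * B).card := by
    have h0 : ((P ∩ Q) * B).card = (P ∩ Q).card + (((P ∩ Q) * B).card - (P ∩ Q).card) := by
      have := card_le_mul hB1 (P ∩ Q)
      omega
    have := kap_le hAdmI h0
    omega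
  -- submodularity
  have hunion : (P ∪ Q) * B = (P * B) ∪ (Q * B) := Finset.union_mul
  have hinter : (P ∩ Q) * B ⊆ (P * B) ∩ (Q * B) :=
    Finset.subset_inter (Finset.mul_subset_mul_right Finset.inter_subset_left)
      (Finset.mul_subset_mul_right Finset.inter_subset_right)
  have hsub : ((P ∪ Q) * B).card + ((P ∩ Q) * B).card ≤ (P * B).card + (Q * B).card := by
    have h1 : ((P * B) ∪ (Q * B)).card + ((P * B) ∩ (Q * B)).card = (P * B).card + (Q * B).card :=
      Finset.card_union_add_card_inter _ _
    have h2 : ((P ∩ Q) * B).card ≤ ((P * B) ∩ (Q * B)).card := Finset.card_le_card hinter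
    rw [hunion]
    omega
  have hPB : (P * B).card = am Γ B + kap Γ B := by rw [hP.1.2, hP.2]
  have hQB : (Q * B).card = am Γ B + kap Γ B := by rw [hQ.1.2, hQ.2]
  have hPQcard : (P ∪ Q).card + (P ∩ Q).card = 2 * am Γ B := by
    have := Finset.card_union_add_card_inter P Q
    rw [hP.2, hQ.2] at this
    omega
  have hIltm : (P ∩ Q).card < am Γ B := by
    rcases lt_or_ge (P ∩ Q).card (am Γ B) with h | h
    · exact h
    · exfalso
      have hsubP : P ∩ Q ⊆ P := Finset.inter_subset_left
      have : P ∩ Q = P := Finset.eq_of_subset_of_card_le hsubP (by rw [hP.2]; exact h)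
      have hPsubQ : P ⊆ Q := by rw [← this]; exact Finset.inter_subset_right
      exact hPQ (Finset.eq_of_subset_of_card_le hPsubQ (by rw [hP.2, hQ.2]))
  -- case on whether the union is unsaturated
  by_cases hUns : Uns Γ B (P ∪ Q)
  · exfalso
    have hAdmU : Adm Γ B (P ∪ Q) := by
      refine ⟨Finset.Nonempty.mono Finset.subset_union_left hP.1.1.1, ?_, hUns⟩
      intro x hx y hy
      have hx' : x⁻¹ * w ∈ Γ := by
        rcases Finset.mem_union.mp hx with h | h
        · exact hP.1.1.2.1 x h w hwP
        · exact hQ.1.1.2.1 x h w hwQ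
      have hy' : w⁻¹ * y ∈ Γ := by
        rcases Finset.mem_union.mp hy with h | h
        · exact hP.1.1.2.1 w hwP y h
        · exact hQ.1.1.2.1 w hwQ y h
      have := Γ.mul_mem hx' hy'
      simpa [mul_assoc] using this
    have hUcard : (P ∪ Q).card + kap Γ B ≤ ((P ∪ Q) * B).card := by
      have h0 : ((P ∪ Q) * B).card = (P ∪ Q).card + (((P ∪ Q) * B).card - (P ∪ Q).card) := by
        have := card_le_mul hB1 (P ∪ Q)
        omega
      have := kap_le hAdmU h0
      omega
    -- conclude the intersection is a fragment, contradicting minimality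
    have hIfrag : ((P ∩ Q) * B).card ≤ (P ∩ Q).card + kap Γ B := by omega
    have : Frag Γ B (P ∩ Q) := ⟨hAdmI, le_antisymm hIfrag hIcard⟩
    exact absurd (am_le this) (by omega)
  · -- saturation
    rw [Uns] at hUns
    push_neg at hUns
    obtain ⟨x, hx, hsat⟩ := hUns
    have hcard1 : 1 ≤ (P ∩ Q).card := Finset.card_pos.mpr ⟨w, hw⟩
    have hsl := sat_lemma (B := B) (Γ := Γ) (X := P ∪ Q) (x := x) hsat
    refine ⟨hsl.1, ?_⟩
    have h2 := hsl.2
    omega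

/-- In the good case the translated atom containing `1` is a subgroup. -/
lemma good_subgroup (hB1 : (1:G) ∈ B) (hne : ∃ X, Adm Γ B X)
    (hGood : ∀ P Q, Atom Γ B P → Atom Γ B Q → (P ∩ Q).Nonempty → P = Q) :
    ∃ (H : Subgroup G) (D : Finset G), (D : Set G) = (H : Set G) ∧ (1:G) ∈ D ∧
      D.card = am Γ B ∧ (D * B).card = am Γ B + kap Γ B ∧ D * D = D := by
  obtain ⟨X, hX⟩ := atom_exists hB1 hne
  obtain ⟨x₀, hx₀⟩ := hX.1.1.1
  set D : Finset G := x₀⁻¹ • X with hD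
  have hatomD : Atom Γ B D := atom_smul x₀⁻¹ hX
  have h1D : (1:G) ∈ D := Finset.mem_smul_finset.mpr ⟨x₀, hx₀, inv_mul_cancel x₀⟩
  have hkey : ∀ h ∈ D, h • D = D := by
    intro h hh
    apply hGood _ _ (atom_smul h hatomD) hatomD
    exact ⟨h, Finset.mem_inter.mpr ⟨Finset.mem_smul_finset.mpr ⟨1, h1D, mul_one h⟩, hh⟩⟩
  have hmul : D * D = D := by
    apply Finset.Subset.antisymm
    · intro z hz
      obtain ⟨d, hd, d', hd', rfl⟩ := Finset.mem_mul.mp hz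
      rw [← hkey d hd]
      exact Finset.mem_smul_finset.mpr ⟨d', hd', rfl⟩
    · intro d hd
      exact Finset.mem_mul.mpr ⟨d, hd, 1, h1D, mul_one d⟩
  have hinv : ∀ h ∈ D, h⁻¹ ∈ D := by
    intro h hh
    have h1 : (1:G) ∈ h • D := (hkey h hh).symm ▸ h1D
    obtain ⟨y, hy, hy1⟩ := Finset.mem_smul_finset.mp h1
    have : y = h⁻¹ := (inv_eq_of_mul_eq_one_right (by simpa using hy1)).symm
    rwa [← this]
  refine ⟨{ carrier := ↑D
            one_mem' := h1D
            mul_mem' := by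
              intro a b ha hb
              rw [← hmul]
              exact Finset.mul_mem_mul ha hb
            inv_mem' := fun ha => hinv _ ha }, D, rfl, h1D, hX.2 ▸ hatomD.2, ?_, hmul⟩
  rw [hatomD.1.2, hatomD.2]


end Machinery

lemma card_mul_single (D : Finset G) (x : G) : (D * {x}).card = D.card := by
  rw [Finset.mul_singleton]
  exact Finset.card_image_of_injective _ (mul_left_injective x)

lemma disj_counting {D X W : Finset G} (hsub : ∀ x ∈ X, D * {x} ⊆ W)
    (hdisj : ∀ x ∈ X, ∀ y ∈ X, x ≠ y → Disjoint (D * {x}) (D * {y})) :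
    X.card * D.card ≤ W.card := by
  classical
  have hbU : X.biUnion (fun x => D * {x}) ⊆ W := by
    intro z hz
    obtain ⟨x, hx, hzx⟩ := Finset.mem_biUnion.mp hz
    exact hsub x hx hzx
  have hsum : ∑ x ∈ X, (D * {x}).card = X.card * D.card := by
    rw [Finset.sum_congr rfl (fun x _ => card_mul_single D x), Finset.sum_const, smul_eq_mul]
  have hbc : (X.biUnion (fun x => D * {x})).card = ∑ x ∈ X, (D * {x}).card :=
    Finset.card_biUnion hdisj
  have hle : (X.biUnion (fun x => D * {x})).card ≤ W.card := Finset.card_le_card hbU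
  omega

/-- Duality: the complement of `X*B` in the ambient coset is admissible for `B⁻¹`. -/
lemma dual_adm {Γ : Subgroup G} {B : Finset G} (hBΓ : (B : Set G) ⊆ (Γ : Set G))
    (hfin : (Γ : Set G).Finite) {X : Finset G} (hX : Adm Γ B X) :
    ∃ Z : Finset G, Adm Γ B⁻¹ Z ∧
      Z.card + (X * B).card = (Γ : Set G).ncard ∧
      (Z * B⁻¹).card + X.card ≤ (Γ : Set G).ncard := by
  classical
  obtain ⟨x₀, hx₀⟩ := hX.1
  set C : Finset G := x₀ • hfin.toFinset with hC
  have hmemC : ∀ z, z ∈ C ↔ x₀⁻¹ * z ∈ Γ := by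
    intro z
    constructor
    · rintro hz
      obtain ⟨y, hy, rfl⟩ := Finset.mem_smul_finset.mp hz
      simpa using hfin.mem_toFinset.mp hy
    · intro hz
      exact Finset.mem_smul_finset.mpr ⟨x₀⁻¹ * z, hfin.mem_toFinset.mpr hz, by
        rw [smul_eq_mul, mul_inv_cancel_left]⟩
  have hCcard : C.card = (Γ : Set G).ncard := by
    rw [hC, Finset.card_smul_finset, Set.ncard_eq_toFinset_card (Γ : Set G) hfin]
  have hXC : X ⊆ C := by
    intro x hx
    exact (hmemC x).mpr (hX.2.1 x₀ hx₀ x hx)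
  have hXBC : X * B ⊆ C := by
    intro z hz
    obtain ⟨x, hx, b, hb, rfl⟩ := Finset.mem_mul.mp hz
    refine (hmemC _).mpr ?_
    rw [← mul_assoc]
    exact Γ.mul_mem (hX.2.1 x₀ hx₀ x hx) (hBΓ hb)
  set Z : Finset G := C \ (X * B) with hZ
  have hZne : Z.Nonempty := by
    obtain ⟨γ, hγ, hout⟩ := hX.2.2 x₀ hx₀
    exact ⟨x₀ * γ, Finset.mem_sdiff.mpr ⟨(hmemC _).mpr (by simpa using hγ), hout⟩⟩
  have hZC : Z ⊆ C := Finset.sdiff_subset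
  have hZBprop : ∀ z ∈ Z * B⁻¹, z ∈ C ∧ z ∉ X := by
    intro z hz
    obtain ⟨w, hw, c, hc, rfl⟩ := Finset.mem_mul.mp hz
    have hcB : c⁻¹ ∈ B := by
      obtain ⟨b, hb, rfl⟩ := Finset.mem_inv.mp hc
      simpa using hb
    have hwC := hZC hw
    constructor
    · refine (hmemC _).mpr ?_
      rw [← mul_assoc]
      refine Γ.mul_mem ((hmemC w).mp hwC) ?_
      have := hBΓ hcB
      simpa using Γ.inv_mem this
    · intro hzX
      have : w ∈ X * B := by
        have : w = (w * c) * c⁻¹ := by group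
        rw [this]
        exact Finset.mul_mem_mul hzX hcB
      exact (Finset.mem_sdiff.mp hw).2 this
  have hZBsub : Z * B⁻¹ ⊆ C \ X := fun z hz =>
    Finset.mem_sdiff.mpr ⟨(hZBprop z hz).1, (hZBprop z hz).2⟩
  refine ⟨Z, ⟨hZne, ?_, ?_⟩, ?_, ?_⟩
  · intro z hz z' hz'
    have h1 := (hmemC z).mp (hZC hz)
    have h2 := (hmemC z').mp (hZC hz')
    have := Γ.mul_mem (Γ.inv_mem h1) h2
    simpa [mul_assoc] using this
  · intro z hz
    refine ⟨z⁻¹ * x₀, ?_, ?_⟩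
    · have := (hmemC z).mp (hZC hz)
      simpa using Γ.inv_mem this
    · have hx₀' : z * (z⁻¹ * x₀) = x₀ := by group
      rw [hx₀']
      intro hmem
      exact (hZBprop x₀ hmem).2 hx₀
  · rw [← hCcard]
    exact Finset.card_sdiff_add_card_eq_card hXBC
  · have h1 := Finset.card_le_card hZBsub
    have h2 := Finset.card_sdiff_add_card_eq_card hXC
    rw [← hCcard]
    omega


/-- The conversion trick: a large chunk of `A` in a single left coset of `K` yields an
efficient covering of `A` by right cosets of `K`. -/
lemma trick {K : Subgroup G} {A A₁ : Finset G} {z : G} (hA₁A : A₁ ⊆ A)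
    (hA₁ : ∀ a ∈ A₁, z⁻¹ * a ∈ K) :
    ∃ X : Finset G, X.card * A₁.card ≤ (A * A).card ∧
      (↑A : Set G) ⊆ ⋃ x ∈ X, (K : Set G) * {x} := by
  obtain ⟨X, hXA, hcov, hdis⟩ := exists_reps K A
  refine ⟨X, ?_, ?_⟩
  · apply disj_counting (D := A₁) (W := A * A)
    · intro x hx
      exact Finset.mul_subset_mul hA₁A (Finset.singleton_subset_iff.mpr (hXA hx))
    · intro x hx y hy hxy
      rw [Finset.disjoint_left]
      intro t ht ht'
      obtain ⟨a, ha, x', hx', rfl⟩ := Finset.mem_mul.mp ht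
      obtain ⟨a', ha', y', hy', heq⟩ := Finset.mem_mul.mp ht'
      rw [Finset.mem_singleton.mp hx'] at *
      rw [Finset.mem_singleton.mp hy'] at heq
      have hxyK : x * y⁻¹ ∈ K := by
        have h1 : x * y⁻¹ = (z⁻¹ * a)⁻¹ * (z⁻¹ * a') := by
          have : a' = a * x * y⁻¹ := by rw [← heq]; group
          rw [this]; group
        rw [h1]
        exact K.mul_mem (K.inv_mem (hA₁ a ha)) (hA₁ a' ha')
      exact hxy (hdis x hx y hy hxyK)
  · intro a ha
    obtain ⟨x, hxX, hk⟩ := hcov a (Finset.mem_coe.mp ha)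
    refine Set.mem_iUnion₂.mpr ⟨x, hxX, ?_⟩
    exact Set.mem_mul.mpr ⟨a * x⁻¹, hk, x, rfl, by group⟩

/-- Extraction of a coset covering of `D*B` by right cosets of the subgroup with carrier `D`. -/
lemma good_cover {B : Finset G} {H : Subgroup G} {D : Finset G}
    (hDH : (D : Set G) = (H : Set G)) (hmulD : D * D = D) :
    ∃ X : Finset G, X ⊆ D * B ∧ (∀ s ∈ D * B, ∃ x ∈ X, s * x⁻¹ ∈ H) ∧
      X.card * D.card ≤ (D * B).card := by
  obtain ⟨X, hXW, hcov, hdis⟩ := exists_reps H (D * B)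
  have hmemH : ∀ d ∈ D, d ∈ H := by
    intro d hd
    have : d ∈ (D : Set G) := hd
    rw [hDH] at this
    exact this
  have hmemD : ∀ d ∈ (H : Set G), d ∈ D := by
    intro d hd
    rw [← hDH] at hd
    exact hd
  refine ⟨X, hXW, hcov, ?_⟩
  apply disj_counting
  · intro x hx
    have : D * {x} ⊆ D * (D * B) :=
      Finset.mul_subset_mul_left (Finset.singleton_subset_iff.mpr (hXW hx))
    rwa [← mul_assoc, hmulD] at this
  · intro x hx y hy hxy
    rw [Finset.disjoint_left]
    intro t ht ht'
    obtain ⟨d, hd, x', hx', rfl⟩ := Finset.mem_mul.mp ht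
    obtain ⟨d', hd', y', hy', heq⟩ := Finset.mem_mul.mp ht'
    rw [Finset.mem_singleton.mp hx'] at *
    rw [Finset.mem_singleton.mp hy'] at heq
    have hxyK : x * y⁻¹ ∈ H := by
      have h1 : x * y⁻¹ = d⁻¹ * d' := by
        have : d' = d * x * y⁻¹ := by rw [← heq]; group
        rw [this]; group
      rw [h1]
      exact H.mul_mem (H.inv_mem (hmemH d hd)) (hmemH d' hd')
    exact hxy (hdis x hx y hy hxyK)

/-- A subgroup-like set with strictly growing product contains two disjoint cosets. -/
lemma m_le_kap_aux {H : Subgroup G} {D B : Finset G} (hB1 : (1:G) ∈ B)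
    (hDH : (D : Set G) = (H : Set G)) (hmulD : D * D = D)
    (hlt : D.card < (D * B).card) : D.card + D.card ≤ (D * B).card := by
  have hDsub : D ⊆ D * B := subset_mul hB1 D
  have hne : ¬ (D * B ⊆ D) := by
    intro hsub
    have := Finset.card_le_card hsub
    omega
  obtain ⟨s, hsW, hsD⟩ := Finset.not_subset.mp hne
  have hsub2 : D * {s} ⊆ D * B := by
    have : D * {s} ⊆ D * (D * B) :=
      Finset.mul_subset_mul_left (Finset.singleton_subset_iff.mpr hsW)
    rwa [← mul_assoc, hmulD] at this
  have hdisj : Disjoint D (D * {s}) := by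
    rw [Finset.disjoint_left]
    intro t ht ht'
    obtain ⟨d, hd, s', hs', rfl⟩ := Finset.mem_mul.mp ht'
    rw [Finset.mem_singleton.mp hs'] at ht
    apply hsD
    have hiff : ∀ u : G, u ∈ D ↔ u ∈ H := fun u => by
      rw [← Finset.mem_coe, hDH, SetLike.mem_coe]
    have hdH : d ∈ H := (hiff d).mp hd
    have hdsH : d * s ∈ H := (hiff _).mp ht
    refine (hiff s).mpr ?_
    have : s = d⁻¹ * (d * s) := by group
    rw [this]
    exact H.mul_mem (H.inv_mem hdH) hdsH
  have hcard : (D ∪ D * {s}).card = D.card + (D * {s}).card := Finset.card_union_of_disjoint hdisj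
  have hsubU : D ∪ D * {s} ⊆ D * B := Finset.union_subset hDsub hsub2
  have := Finset.card_le_card hsubU
  rw [hcard, card_mul_single] at this
  exact this

/-- Explicit conjugate subgroup. -/
lemma conj_subgroup (H : Subgroup G) (g : G) :
    ∃ K : Subgroup G, (K : Set G) = (fun x => g * x * g⁻¹) '' (H : Set G) := by
  refine ⟨{ carrier := (fun x => g * x * g⁻¹) '' (H : Set G)
            one_mem' := ⟨1, H.one_mem, by group⟩
            mul_mem' := ?_
            inv_mem' := ?_ }, rfl⟩
  · rintro a b ⟨x, hx, rfl⟩ ⟨y, hy, rfl⟩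
    exact ⟨x * y, H.mul_mem hx hy, by group⟩
  · rintro a ⟨x, hx, rfl⟩
    exact ⟨x⁻¹, H.inv_mem hx, by group⟩

lemma conj_inj (g : G) : Function.Injective (fun x : G => g * x * g⁻¹) := by
  intro u v huv
  simp only at huv
  have h1 := mul_right_cancel huv
  exact mul_left_cancel h1

/-- Packaged good-case output: subgroup, its carrier, and a coset covering of `B`. -/
lemma good_package {Γ : Subgroup G} {B : Finset G} (hB1 : (1:G) ∈ B)
    (hne : ∃ X, Adm Γ B X) (hκ1 : 1 ≤ kap Γ B)
    (hGood : ∀ P Q, Atom Γ B P → Atom Γ B Q → (P ∩ Q).Nonempty → P = Q) :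
    ∃ (H : Subgroup G) (D X₀ : Finset G), (D : Set G) = (H : Set G) ∧
      D.card = am Γ B ∧ am Γ B ≤ kap Γ B ∧ B.card ≤ am Γ B + kap Γ B ∧
      X₀.card * am Γ B ≤ am Γ B + kap Γ B ∧
      ∀ b ∈ B, ∃ x ∈ X₀, b * x⁻¹ ∈ H := by
  obtain ⟨H, D, hDH, h1D, hDcard, hDBcard, hmulD⟩ := good_subgroup hB1 hne hGood
  have hBW : B ⊆ D * B := fun b hb => Finset.mem_mul.mpr ⟨1, h1D, b, hb, one_mul b⟩
  have hnmκ : B.card ≤ am Γ B + kap Γ B := by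
    have := Finset.card_le_card hBW
    rw [hDBcard] at this
    exact this
  have hmlt : D.card < (D * B).card := by rw [hDcard, hDBcard]; omega
  have hmκ : am Γ B ≤ kap Γ B := by
    have := m_le_kap_aux hB1 hDH hmulD hmlt
    rw [hDcard, hDBcard] at this
    omega
  obtain ⟨X₀, hX₀W, hcov, hcount⟩ := good_cover (B := B) hDH hmulD
  refine ⟨H, D, X₀, hDH, hDcard, hmκ, hnmκ, ?_, ?_⟩
  · rw [hDcard, hDBcard] at hcount
    exact hcount
  · intro b hb
    exact hcov b (hBW hb)

/-- Packaged duality output comparing the `B` and `B⁻¹` worlds. -/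
lemma dual_package {Γ : Subgroup G} {B : Finset G} (hB1 : (1:G) ∈ B)
    (hB1' : (1:G) ∈ B⁻¹) (hBΓ : (B : Set G) ⊆ (Γ : Set G))
    (hBΓ' : ((B⁻¹ : Finset G) : Set G) ⊆ (Γ : Set G))
    (hfin : (Γ : Set G).Finite) (hne : ∃ X, Adm Γ B X) :
    (∃ X, Adm Γ B⁻¹ X) ∧ kap Γ B⁻¹ = kap Γ B ∧
      am Γ B⁻¹ + am Γ B + kap Γ B ≤ (Γ : Set G).ncard := by
  obtain ⟨Xat, hXat⟩ := atom_exists hB1 hne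
  obtain ⟨Z, hZAdm, hZc1, hZc2⟩ := dual_adm hBΓ hfin hXat.1.1
  have hne' : ∃ X, Adm Γ B⁻¹ X := ⟨Z, hZAdm⟩
  have hXatB : (Xat * B).card = am Γ B + kap Γ B := by rw [hXat.1.2, hXat.2]
  have hXatcard : Xat.card = am Γ B := hXat.2
  have hZle : Z.card ≤ (Z * B⁻¹).card := card_le_mul hB1' Z
  obtain ⟨kz, hkz⟩ : ∃ k, (Z * B⁻¹).card = Z.card + k := ⟨(Z * B⁻¹).card - Z.card, by omega⟩
  have hκ'κ : kap Γ B⁻¹ ≤ kap Γ B := by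
    have h1 := kap_le hZAdm hkz
    omega
  obtain ⟨X'at, hX'at⟩ := atom_exists hB1' hne'
  obtain ⟨Z', hZ'Adm, hZ'c1, hZ'c2⟩ := dual_adm hBΓ' hfin hX'at.1.1
  rw [inv_inv] at hZ'Adm hZ'c2
  have hX'atB : (X'at * B⁻¹).card = am Γ B⁻¹ + kap Γ B⁻¹ := by rw [hX'at.1.2, hX'at.2]
  have hX'atcard : X'at.card = am Γ B⁻¹ := hX'at.2
  have hκκ' : kap Γ B ≤ kap Γ B⁻¹ := by
    have hZ'le : Z'.card ≤ (Z' * B).card := card_le_mul hB1 Z'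
    obtain ⟨kz', hkz'⟩ : ∃ k, (Z' * B).card = Z'.card + k :=
      ⟨(Z' * B).card - Z'.card, by omega⟩
    have h1 := kap_le hZ'Adm hkz'
    omega
  have hκeq : kap Γ B⁻¹ = kap Γ B := le_antisymm hκ'κ hκκ'
  have hZfrag : Frag Γ B⁻¹ Z := by
    refine ⟨hZAdm, ?_⟩
    have h1 := kap_le hZAdm hkz
    omega
  have hm'Z : am Γ B⁻¹ ≤ Z.card := am_le hZfrag
  exact ⟨hne', hκeq, by omega⟩

/-- Pigeonhole: some coset piece of `S` is large. -/
lemma pigeonhole_piece (S X' D' : Finset G)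
    (hcov : ∀ s ∈ S, ∃ x ∈ X', s ∈ D' * {x}) (hX'ne : X'.Nonempty) :
    ∃ x₁ ∈ X', S.card ≤ X'.card * (S ∩ (D' * {x₁})).card := by
  classical
  obtain ⟨x₁, hx₁X, hx₁max⟩ :=
    Finset.exists_max_image X' (fun x => (S ∩ (D' * {x})).card) hX'ne
  refine ⟨x₁, hx₁X, ?_⟩
  have hBsplit : S ⊆ X'.biUnion (fun x => S ∩ (D' * {x})) := by
    intro s hs
    obtain ⟨x, hx, hmem⟩ := hcov s hs
    exact Finset.mem_biUnion.mpr ⟨x, hx, Finset.mem_inter.mpr ⟨hs, hmem⟩⟩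
  have h1 : S.card ≤ (X'.biUnion (fun x => S ∩ (D' * {x}))).card :=
    Finset.card_le_card hBsplit
  have h2 : (X'.biUnion (fun x => S ∩ (D' * {x}))).card
      ≤ ∑ x ∈ X', (S ∩ (D' * {x})).card := Finset.card_biUnion_le
  have h3 : ∑ x ∈ X', (S ∩ (D' * {x})).card ≤ X'.card * (S ∩ (D' * {x₁})).card := by
    calc ∑ x ∈ X', (S ∩ (D' * {x})).card ≤ ∑ _x ∈ X', (S ∩ (D' * {x₁})).card :=
          Finset.sum_le_sum hx₁max
      _ = X'.card * (S ∩ (D' * {x₁})).card := by rw [Finset.sum_const, smul_eq_mul]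
  omega

end Hamidoune



set_option maxHeartbeats 1600000 in
open Hamidoune in
/-- Hamidoune's theorem: if `|A·A| ≤ (2 - ε)|A|` then `A` is covered by at most `2/ε - 1`
right-cosets of a finite subgroup `H` of order at most `(2/ε)|A|`. -/
theorem hamidoune_theorem (ε : ℝ) (hε : 0 < ε) (G : Type*) [Group G] [DecidableEq G]
    (A : Finset G) (hA : A.Nonempty)
    (h : ((A * A).card : ℝ) ≤ (2 - ε) * A.card) :
    ∃ H : Subgroup G, (H : Set G).Finite ∧
      ((H : Set G).ncard : ℝ) ≤ (2 / ε) * A.card ∧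
      ∃ X : Finset G, (X.card : ℝ) ≤ 2 / ε - 1 ∧
        (↑A : Set G) ⊆ ⋃ x ∈ X, (H : Set G) * {x} := by
  classical
  obtain ⟨a₀, ha₀⟩ := hA
  have hn1 : 1 ≤ A.card := Finset.card_pos.mpr ⟨a₀, ha₀⟩
  set n := A.card with hn
  have hnR : (1:ℝ) ≤ n := by exact_mod_cast hn1
  have hnpos : (0:ℝ) < n := by linarith
  have hAA : n ≤ (A * A).card := Finset.card_le_card_mul_right ⟨a₀, ha₀⟩
  have hAAR : (n:ℝ) ≤ ((A*A).card : ℝ) := by exact_mod_cast hAA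
  have hε1 : ε ≤ 1 := by nlinarith
  have h2ε : (2:ℝ) ≤ 2 / ε := by rw [le_div_iff₀ hε]; nlinarith
  have hεinv : (2 - ε : ℝ) < 2 / ε := by rw [lt_div_iff₀ hε]; nlinarith [sq_nonneg (ε - 1)]
  set B := A * {a₀⁻¹} with hB
  have hB1 : (1:G) ∈ B := by
    rw [hB]
    have := Finset.mul_mem_mul ha₀ (Finset.mem_singleton_self a₀⁻¹)
    simpa using this
  have hBmem : ∀ a ∈ A, a * a₀⁻¹ ∈ B := fun a ha =>
    hB ▸ Finset.mul_mem_mul ha (Finset.mem_singleton_self a₀⁻¹)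
  have hBcard : B.card = n := card_mul_single A a₀⁻¹
  set Γ : Subgroup G := Subgroup.closure (B : Set G) with hΓdef
  have hBΓ : (B : Set G) ⊆ (Γ : Set G) := Subgroup.subset_closure
  have hABcard : (A * B).card = (A * A).card := by
    rw [hB, ← mul_assoc]
    exact card_mul_single _ _
  by_cases hΓfin : (Γ : Set G).Finite ∧ ((Γ : Set G).ncard : ℝ) ≤ (2 / ε) * n
  · obtain ⟨hfin, hsize⟩ := hΓfin
    refine ⟨Γ, hfin, hsize, {a₀}, ?_, ?_⟩
    · simp only [Finset.card_singleton, Nat.cast_one]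
      linarith
    · intro a ha
      refine Set.mem_iUnion₂.mpr ⟨a₀, Finset.mem_singleton_self a₀, ?_⟩
      refine Set.mem_mul.mpr ⟨a * a₀⁻¹, ?_, a₀, rfl, by group⟩
      exact hBΓ (Finset.mem_coe.mpr (hBmem a (Finset.mem_coe.mp ha)))
  · push_neg at hΓfin
    have hbig : (Γ : Set G).Finite → (2 / ε) * n < ((Γ : Set G).ncard : ℝ) := hΓfin
    set P := A.filter (fun x => a₀⁻¹ * x ∈ Γ) with hP
    have ha₀P : a₀ ∈ P := Finset.mem_filter.mpr ⟨ha₀, by simpa using Γ.one_mem⟩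
    have hPA : P ⊆ A := Finset.filter_subset _ _
    have hSCP : SC Γ P := by
      intro x hx y hy
      have hx' := (Finset.mem_filter.mp hx).2
      have hy' := (Finset.mem_filter.mp hy).2
      have := Γ.mul_mem (Γ.inv_mem hx') hy'
      simpa [mul_assoc] using this
    have hPBin : ∀ z ∈ P * B, a₀⁻¹ * z ∈ Γ := by
      intro z hz
      obtain ⟨p, hp, b, hb, rfl⟩ := Finset.mem_mul.mp hz
      rw [← mul_assoc]
      exact Γ.mul_mem ((Finset.mem_filter.mp hp).2) (hBΓ hb)
    have hPBcard : (P * B).card ≤ (A * A).card := by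
      rw [← hABcard]
      exact Finset.card_le_card (Finset.mul_subset_mul_right hPA)
    have hAAbig : ((A * A).card : ℝ) < (2/ε) * n :=
      lt_of_le_of_lt h (mul_lt_mul_of_pos_right hεinv hnpos)
    have hPUns : Uns Γ B P := by
      intro x hx
      by_contra hcon
      push_neg at hcon
      obtain ⟨hfin, hle⟩ := sat_lemma (B := B) (Γ := Γ) (X := P) (x := x) hcon
      have h1 := hbig hfin
      have hle2 : ((Γ : Set G).ncard : ℝ) ≤ ((A*A).card : ℝ) := by
        exact_mod_cast le_trans hle hPBcard
      linarith
    have hAdmP : Adm Γ B P := ⟨⟨a₀, ha₀P⟩, hSCP, hPUns⟩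
    have hne : ∃ X, Adm Γ B X := ⟨P, hAdmP⟩
    have hnκ : n + kap Γ B ≤ (A * A).card := by
      have hPk : P.card + kap Γ B ≤ (P * B).card := by
        have hle := card_le_mul hB1 P
        obtain ⟨k, hk⟩ : ∃ k, (P * B).card = P.card + k := ⟨(P * B).card - P.card, by omega⟩
        have := kap_le hAdmP hk
        omega
      have hdisj : Disjoint (P * B) ((A \ P) * B) := by
        rw [Finset.disjoint_left]
        intro z hz hz'
        obtain ⟨u, hu, b, hb, rfl⟩ := Finset.mem_mul.mp hz'
        have huP : u ∉ P := (Finset.mem_sdiff.mp hu).2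
        apply huP
        refine Finset.mem_filter.mpr ⟨(Finset.mem_sdiff.mp hu).1, ?_⟩
        have h1 : a₀⁻¹ * (u * b) ∈ Γ := hPBin _ hz
        have h2 : a₀⁻¹ * u = (a₀⁻¹ * (u * b)) * b⁻¹ := by group
        rw [h2]
        exact Γ.mul_mem h1 (Γ.inv_mem (hBΓ hb))
      have hunion : (P * B) ∪ ((A \ P) * B) ⊆ A * B :=
        Finset.union_subset (Finset.mul_subset_mul_right hPA)
          (Finset.mul_subset_mul_right Finset.sdiff_subset)
      have hcards : (P * B).card + ((A \ P) * B).card ≤ (A * B).card := by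
        rw [← Finset.card_union_of_disjoint hdisj]
        exact Finset.card_le_card hunion
      have hsd : (A \ P).card ≤ ((A \ P) * B).card :=
        Finset.card_le_card_mul_right ⟨1, hB1⟩
      have hsplit : (A \ P).card + P.card = n := Finset.card_sdiff_add_card_eq_card hPA
      omega
    have hκR : (kap Γ B : ℝ) ≤ (1 - ε) * n := by
      have h1 : ((n : ℕ) : ℝ) + (kap Γ B : ℝ) ≤ ((A*A).card : ℝ) := by exact_mod_cast hnκ
      linarith
    have hκ1 : 1 ≤ kap Γ B := kap_pos hB1 (by rw [hΓdef]) hne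
    by_cases hGood : ∀ P' Q', Atom Γ B P' → Atom Γ B Q' → (P' ∩ Q').Nonempty → P' = Q'
    · -- good case
      obtain ⟨H, D, X₀, hDH, hDcard, hmκ, hnmκ, hcount, hcov⟩ := good_package hB1 hne hκ1 hGood
      rw [hBcard] at hnmκ
      have hmR : ε * n ≤ (am Γ B : ℝ) := by
        have h1 : (n:ℝ) ≤ (am Γ B : ℝ) + (kap Γ B : ℝ) := by exact_mod_cast hnmκ
        linarith
      have hmpos : (0:ℝ) < (am Γ B : ℝ) := by nlinarith
      have hcountR : (X₀.card : ℝ) * (am Γ B : ℝ) ≤ (am Γ B : ℝ) + (kap Γ B : ℝ) := by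
        exact_mod_cast hcount
      have hX₀R : ε * (X₀.card:ℝ) ≤ 1 := by nlinarith
      have hX₀R2 : (X₀.card : ℝ) ≤ 2/ε - 1 := by
        rw [le_sub_iff_add_le, ← sub_nonneg]
        have heq2 : 2/ε - ((X₀.card:ℝ) + 1) = (2 - ε*((X₀.card:ℝ) + 1))/ε := by field_simp
        rw [heq2]
        apply div_nonneg _ hε.le
        nlinarith
      refine ⟨H, ?_, ?_, X₀.image (· * a₀), ?_, ?_⟩
      · rw [← hDH]; exact D.finite_toSet
      · rw [← hDH, Set.ncard_coe_finset, hDcard]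
        have h4 : (am Γ B : ℝ) ≤ (1 - ε) * n := le_trans (by exact_mod_cast hmκ) hκR
        have h3 : (1-ε) * (n:ℝ) ≤ (2/ε) * n :=
          mul_le_mul_of_nonneg_right (by linarith) hnpos.le
        linarith
      · have hc : ((X₀.image (· * a₀)).card : ℝ) ≤ (X₀.card : ℝ) := by
          exact_mod_cast Finset.card_image_le
        linarith
      · intro a ha
        obtain ⟨x, hxX, hk⟩ := hcov _ (hBmem a (Finset.mem_coe.mp ha))
        refine Set.mem_iUnion₂.mpr ⟨x * a₀, Finset.mem_image_of_mem _ hxX, ?_⟩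
        refine Set.mem_mul.mpr ⟨(a * a₀⁻¹) * x⁻¹, hk, x * a₀, rfl, by group⟩
    · -- bad case
      push_neg at hGood
      obtain ⟨P₀, Q₀, hP₀, hQ₀, hint₀, hPQne⟩ := hGood
      obtain ⟨hfin, hNbound⟩ := atom_inter hB1 hP₀ hQ₀ hint₀ hPQne
      have hNR : (2 / ε) * n < (((Γ : Set G).ncard : ℕ) : ℝ) := hbig hfin
      have hB1' : (1:G) ∈ B⁻¹ := by
        rw [Finset.mem_inv]; exact ⟨1, hB1, inv_one⟩
      have hBΓ' : ((B⁻¹ : Finset G) : Set G) ⊆ (Γ : Set G) := by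
        intro x hx
        rw [Finset.mem_coe, Finset.mem_inv] at hx
        obtain ⟨b, hb, rfl⟩ := hx
        exact Γ.inv_mem (hBΓ hb)
      obtain ⟨hne', hκeq, hmm'⟩ := dual_package hB1 hB1' hBΓ hBΓ' hfin hne
      have hGood' : ∀ P' Q', Atom Γ B⁻¹ P' → Atom Γ B⁻¹ Q' → (P' ∩ Q').Nonempty → P' = Q' := by
        by_contra hc
        push_neg at hc
        obtain ⟨P₁, Q₁, hP₁, hQ₁, hint₁, hne₁⟩ := hc
        obtain ⟨_, hNb'⟩ := atom_inter hB1' hP₁ hQ₁ hint₁ hne₁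
        omega
      have hκ1' : 1 ≤ kap Γ B⁻¹ := by omega
      obtain ⟨H', D', X', hD'H, hD'card, hm'κ, hnm'κ, hcount', hcov'⟩ :=
        good_package hB1' hne' hκ1' hGood'
      have hB'card : (B⁻¹ : Finset G).card = n := by rw [Finset.card_inv]; exact hBcard
      rw [hB'card] at hnm'κ
      have hX'ne : X'.Nonempty := by
        obtain ⟨x, hx, _⟩ := hcov' 1 hB1'
        exact ⟨x, hx⟩
      -- pigeonhole for the largest piece
      have hcovmem : ∀ s ∈ B⁻¹, ∃ x ∈ X', s ∈ D' * {x} := by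
        intro s hs
        obtain ⟨x, hx, hk⟩ := hcov' s hs
        refine ⟨x, hx, ?_⟩
        refine Finset.mem_mul.mpr ⟨s * x⁻¹, ?_, x, Finset.mem_singleton_self x, by group⟩
        rw [← Finset.mem_coe, hD'H]
        exact hk
      obtain ⟨x₁, hx₁X, hpig0⟩ := pigeonhole_piece B⁻¹ X' D' hcovmem hX'ne
      set C₀ := B⁻¹ ∩ (D' * {x₁}) with hC₀
      have hpig : n ≤ X'.card * C₀.card := by rw [← hB'card]; exact hpig0
      -- real bounds
      have hκ'R : (kap Γ B⁻¹ : ℝ) ≤ (1 - ε) * n := by rw [hκeq]; exact hκR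
      have hm'R : ε * n ≤ (am Γ B⁻¹ : ℝ) := by
        have h1 : (n:ℝ) ≤ (am Γ B⁻¹ : ℝ) + (kap Γ B⁻¹ : ℝ) := by exact_mod_cast hnm'κ
        linarith
      have hm'pos : (0:ℝ) < (am Γ B⁻¹ : ℝ) := by nlinarith
      have hcount'R : (X'.card : ℝ) * (am Γ B⁻¹ : ℝ) ≤ (am Γ B⁻¹ : ℝ) + (kap Γ B⁻¹ : ℝ) := by
        exact_mod_cast hcount'
      have hX'R : ε * (X'.card : ℝ) ≤ 1 := by nlinarith
      have hpigR : (n : ℝ) ≤ (X'.card : ℝ) * (C₀.card : ℝ) := by exact_mod_cast hpig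
      have hC₀R : ε * n ≤ (C₀.card : ℝ) := by nlinarith [Nat.cast_nonneg (α := ℝ) C₀.card]
      -- conjugate subgroup and the chunk of `A`
      obtain ⟨K, hKset⟩ := conj_subgroup H' a₀⁻¹
      have hH'fin : (H' : Set G).Finite := by rw [← hD'H]; exact D'.finite_toSet
      have hKfin : (K : Set G).Finite := by rw [hKset]; exact hH'fin.image _
      have hKcard : ((K : Set G).ncard : ℝ) = (D'.card : ℝ) := by
        rw [hKset, Set.ncard_image_of_injective _ (conj_inj a₀⁻¹), ← hD'H,
          Set.ncard_coe_finset]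
      set A₁ : Finset G := C₀.image (fun c => c⁻¹ * a₀) with hA₁
      have hA₁card : A₁.card = C₀.card := by
        rw [hA₁]
        apply Finset.card_image_of_injective
        intro u v huv
        simpa using huv
      have hA₁A : A₁ ⊆ A := by
        intro a ha
        obtain ⟨c, hc, rfl⟩ := Finset.mem_image.mp ha
        have hcB : c ∈ B⁻¹ := (Finset.mem_inter.mp (hC₀ ▸ hc)).1
        rw [Finset.mem_inv] at hcB
        obtain ⟨b, hb, rfl⟩ := hcB
        rw [hB] at hb
        obtain ⟨a', ha', w, hw, rfl⟩ := Finset.mem_mul.mp hb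
        rw [Finset.mem_singleton.mp hw]
        have heq : (a' * a₀⁻¹)⁻¹⁻¹ * a₀ = a' := by group
        rw [heq]
        exact ha'
      have hA₁K : ∀ a ∈ A₁, (x₁⁻¹ * a₀)⁻¹ * a ∈ K := by
        intro a ha
        obtain ⟨c, hc, rfl⟩ := Finset.mem_image.mp ha
        have hcD : c ∈ D' * {x₁} := (Finset.mem_inter.mp (hC₀ ▸ hc)).2
        obtain ⟨d, hd, w, hw, rfl⟩ := Finset.mem_mul.mp hcD
        rw [Finset.mem_singleton.mp hw]
        have hdH : d ∈ H' := by rw [← SetLike.mem_coe, ← hD'H]; exact hd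
        rw [← SetLike.mem_coe, hKset]
        refine ⟨d⁻¹, H'.inv_mem hdH, ?_⟩
        show a₀⁻¹ * d⁻¹ * a₀⁻¹⁻¹ = (x₁⁻¹ * a₀)⁻¹ * ((d * x₁)⁻¹ * a₀)
        group
      obtain ⟨Xf, hcnt, hcovf⟩ := trick hA₁A hA₁K
      refine ⟨K, hKfin, ?_, Xf, ?_, hcovf⟩
      · rw [hKcard, hD'card]
        have h4 : (am Γ B⁻¹ : ℝ) ≤ (1 - ε) * n := le_trans (by exact_mod_cast hm'κ) hκ'R
        have h3 : (1 - ε) * (n : ℝ) ≤ (2 / ε) * n :=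
          mul_le_mul_of_nonneg_right (by linarith) hnpos.le
        linarith
      · have hcntR : (Xf.card : ℝ) * (A₁.card : ℝ) ≤ ((A * A).card : ℝ) := by exact_mod_cast hcnt
        rw [hA₁card] at hcntR
        have hXf0 : (0:ℝ) ≤ (Xf.card : ℝ) := Nat.cast_nonneg _
        have hεXf : ε * (Xf.card : ℝ) ≤ 2 - ε := by nlinarith
        rw [le_sub_iff_add_le, ← sub_nonneg]
        have heq2 : 2 / ε - ((Xf.card : ℝ) + 1) = (2 - ε * ((Xf.card : ℝ) + 1)) / ε := by
          field_simp
        rw [heq2]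
        apply div_nonneg _ hε.le
        nlinarith
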